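/- Let G be a finite connected simple graph on vertex set V with two edge-cost functions c1, c2 : E(G) → ℝ, let λ ∈ (0, 1), let T be a spanning tree of G, let S ⊆ V be nonempty with the subgraph of T induced on S connected, and let T_S be a spanning tree of the induced subgraph G[S] that minimizes the scalarized cost ∑_{e} (λ c1(e) + (1−λ) c2(e)) among all spanning trees of G[S]. Let T' be the spanning subgraph of G with edge set (E(T) \ E(T[S])) ∪ E(T_S). Then T does not dominate T'; that is, it is not the case that c1(T) ≤ c1(T') and c2(T) ≤ c2(T') with at least one of these inequalities strict. -/

import Mathlib

/-- The edge set of a graph on a subtype `S`, viewed as a set of edges of the ambient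
vertex type. -/
def liftedEdges {V : Type*} {S : Set V} (H : SimpleGraph S) : Set (Sym2 V) :=
  Sym2.map (Subtype.val : S → V) '' H.edgeSet

/-- The result of the sub-graph (SG) mutation: replace the edges of `T` inside `S` by the
edges of a spanning tree `Ts` of the induced subgraph on `S`. -/
def sgMutant {V : Type*} (T : SimpleGraph V) (S : Set V) (Ts : SimpleGraph S) :
    SimpleGraph V :=
  SimpleGraph.fromEdgeSet ((T.edgeSet \ liftedEdges (T.induce S)) ∪ liftedEdges Ts)

/-- Total cost of (the edges of) a graph with respect to an edge-cost function. -/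
noncomputable def edgeCost {V : Type*} (H : SimpleGraph V) (c : Sym2 V → ℝ) : ℝ :=
  ∑ᶠ e ∈ H.edgeSet, c e

/-- Total cost of a graph on a subtype, with respect to an edge-cost function of the
ambient vertex type. -/
noncomputable def subEdgeCost {V : Type*} {S : Set V} (H : SimpleGraph S) (c : Sym2 V → ℝ) : ℝ :=
  ∑ᶠ e ∈ H.edgeSet, c (Sym2.map (Subtype.val : S → V) e)

/-- `subEdgeCost` equals the finsum over the lifted edge set. -/
lemma subEdgeCost_eq_finsum_lifted {V : Type*} {S : Set V} (H : SimpleGraph S)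
    (c : Sym2 V → ℝ) : subEdgeCost H c = ∑ᶠ e ∈ liftedEdges H, c e := by
  unfold subEdgeCost liftedEdges
  rw [finsum_mem_image]
  exact fun x _ y _ h => Sym2.map.injective Subtype.val_injective h

/-- Linearity of finsum over a finite set. -/
lemma finsum_mem_lin {α : Type*} {s : Set α} (hs : s.Finite) (c1 c2 : α → ℝ) (lam : ℝ) :
    ∑ᶠ e ∈ s, (lam * c1 e + (1 - lam) * c2 e) =
      lam * ∑ᶠ e ∈ s, c1 e + (1 - lam) * ∑ᶠ e ∈ s, c2 e := by
  rw [← hs.coe_toFinset]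
  simp only [finsum_mem_coe_finset, Finset.sum_add_distrib, Finset.mul_sum]

/-- The Pareto-beneficial property of the scalarized sub-graph mutation (SGS): the
mutant cannot be dominated by its parent. -/
theorem sgMutant_not_dominated_by_parent {V : Type*} [Fintype V]
    (G : SimpleGraph V) (hG : G.Connected)
    (c1 c2 : Sym2 V → ℝ) (lam : ℝ) (hlam0 : 0 < lam) (hlam1 : lam < 1)
    (T : SimpleGraph V) (hTle : T ≤ G) (hT : T.IsTree)
    (S : Set V) (hS : S.Nonempty) (hconn : (T.induce S).Connected)
    (Ts : SimpleGraph S) (hTsle : Ts ≤ G.induce S) (hTs : Ts.IsTree)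
    (hmin : ∀ T'' : SimpleGraph S, T'' ≤ G.induce S → T''.IsTree →
      subEdgeCost Ts (fun e => lam * c1 e + (1 - lam) * c2 e) ≤
        subEdgeCost T'' (fun e => lam * c1 e + (1 - lam) * c2 e)) :
    ¬ (edgeCost T c1 ≤ edgeCost (sgMutant T S Ts) c1 ∧
        edgeCost T c2 ≤ edgeCost (sgMutant T S Ts) c2 ∧
        (edgeCost T c1 < edgeCost (sgMutant T S Ts) c1 ∨
          edgeCost T c2 < edgeCost (sgMutant T S Ts) c2)) := by
  rintro ⟨h1, h2, hstrict⟩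
  set L1 := liftedEdges (T.induce S) with hL1
  set L2 := liftedEdges Ts with hL2
  -- L1 edges are edges of T
  have hL1sub : L1 ⊆ T.edgeSet := by
    rintro e ⟨e', he', rfl⟩
    induction e' using Sym2.ind with
    | _ a b =>
      simp only [SimpleGraph.mem_edgeSet, SimpleGraph.comap_adj] at he' ⊢
      exact he'
  -- edge set of the mutant
  have hEdge : (sgMutant T S Ts).edgeSet = (T.edgeSet \ L1) ∪ L2 := by
    rw [sgMutant, SimpleGraph.edgeSet_fromEdgeSet]
    refine Set.Subset.antisymm Set.diff_subset (Set.subset_diff.mpr ⟨subset_rfl, ?_⟩)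
    rw [Set.disjoint_right]
    rintro e hdiag (⟨he1, -⟩ | ⟨e', he', rfl⟩)
    · exact T.not_isDiag_of_mem_edgeSet he1 hdiag
    · rw [Sym2.mem_diagSet, Sym2.isDiag_map Subtype.val_injective] at hdiag
      exact Ts.not_isDiag_of_mem_edgeSet he' hdiag
  -- disjointness
  have hdisj2 : Disjoint (T.edgeSet \ L1) L2 := by
    rw [Set.disjoint_right]
    rintro e ⟨e', he', rfl⟩ ⟨heT, heL1⟩
    apply heL1
    induction e' using Sym2.ind with
    | _ a b =>
      refine ⟨s(a, b), ?_, rfl⟩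
      simpa using heT
  have hdisj1 : Disjoint (T.edgeSet \ L1) L1 := Set.disjoint_sdiff_left
  have hfin : ∀ s : Set (Sym2 V), s.Finite := fun s => s.toFinite
  -- cost decompositions
  have hcostM : ∀ c : Sym2 V → ℝ, edgeCost (sgMutant T S Ts) c =
      (∑ᶠ e ∈ T.edgeSet \ L1, c e) + subEdgeCost Ts c := by
    intro c
    rw [edgeCost, hEdge, finsum_mem_union hdisj2 (hfin _) (hfin _),
      subEdgeCost_eq_finsum_lifted]
  have hcostT : ∀ c : Sym2 V → ℝ, edgeCost T c =
      (∑ᶠ e ∈ T.edgeSet \ L1, c e) + subEdgeCost (T.induce S) c := by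
    intro c
    rw [edgeCost, subEdgeCost_eq_finsum_lifted,
      ← finsum_mem_union hdisj1 (hfin _) (hfin _), Set.diff_union_of_subset hL1sub]
  -- T.induce S is a spanning tree of G.induce S
  have hTiS_le : T.induce S ≤ G.induce S := fun a b hab => hTle hab
  have hTiS_tree : (T.induce S).IsTree := by
    refine ⟨hconn, fun v c hc => ?_⟩
    exact hT.IsAcyclic (c.map (SimpleGraph.Embedding.induce (G := T) S).toHom)
      (hc.map (SimpleGraph.Embedding.induce (G := T) S).injective)
  have hkey := hmin (T.induce S) hTiS_le hTiS_tree
  -- linearity of subEdgeCost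
  have hlin : ∀ (H : SimpleGraph S),
      subEdgeCost H (fun e => lam * c1 e + (1 - lam) * c2 e) =
        lam * subEdgeCost H c1 + (1 - lam) * subEdgeCost H c2 := by
    intro H
    exact finsum_mem_lin H.edgeSet.toFinite _ _ lam
  rw [hlin, hlin] at hkey
  have e1M := hcostM c1
  have e2M := hcostM c2
  have e1T := hcostT c1
  have e2T := hcostT c2
  rcases hstrict with hs | hs <;> nlinarith [h1, h2, hkey]
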